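/- arXiv:2009.09316 — 2 statements merged into one kernel-verified Lean document; each statement's English description precedes it below -/
import Mathlib

section
/- For every finite mixture (γ_1,…,γ_P) and all ε, ε', η, C > 0 there exists δ > 0 such that the following holds for every N ≥ 1: if P ⊆ ℝ^N is a polytope presented by half-spaces and contained in the unit ball {x : |x|₂ ≤ 1}, and H : ℝ^N → ℝ satisfies the C-derivative bounds and is (ε,δ)-superb for P, then every x ∈ P with H(x) ≥ max_{y ∈ P} H(y) − √ε·∫_{|x|₂²}^{|x|₂²+ε'} ζ(t) dt + η admits an ε-corner x̂ of P with |x − x̂|₂² ≤ ε'. -/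
/-- Second derivative `ξ''(t) = ∑_{p=1}^P γ_p² p(p-1) t^{p-2}` of the mixture function. -/
noncomputable def xiSecond (Pd : ℕ) (γ : ℕ → ℝ) (t : ℝ) : ℝ :=
  ∑ p ∈ Finset.Icc 1 Pd, (γ p) ^ 2 * ((p : ℝ) * ((p : ℝ) - 1)) * t ^ (p - 2)

/-- `ζ(t) = √(ξ''(t))`. -/
noncomputable def zeta (Pd : ℕ) (γ : ℕ → ℝ) (t : ℝ) : ℝ :=
  Real.sqrt (xiSecond Pd γ t)

/-- The normalized inner product `⟨a,·⟩ = (∑ i, a i * v i)/N` as a linear functional. -/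
noncomputable def dotL {N : ℕ} (a : Fin N → ℝ) : (Fin N → ℝ) →ₗ[ℝ] ℝ where
  toFun v := (∑ i, a i * v i) / N
  map_add' v w := by
    simp [Pi.add_apply, mul_add, Finset.sum_add_distrib, add_div]
  map_smul' c v := by
    simp only [Pi.smul_apply, smul_eq_mul, RingHom.id_apply]
    rw [show (∑ x : Fin N, a x * (c * v x)) = c * ∑ i, a i * v i by
      rw [Finset.mul_sum]; exact Finset.sum_congr rfl fun i _ => by ring]
    ring

/-- The polytope `{x : ⟨a_j, x⟩ ≤ b_j for all j}` presented by half-spaces. -/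
def Pset {N : ℕ} {J : Type*} (a : J → Fin N → ℝ) (b : J → ℝ) : Set (Fin N → ℝ) :=
  {x | ∀ j, dotL (a j) x ≤ b j}

/-- `U(x)`: the tangent space of the minimal face of the polytope containing `x`, i.e. the
intersection of the kernels of the constraints active at `x`. -/
noncomputable def Uspace {N : ℕ} {J : Type*} (a : J → Fin N → ℝ) (b : J → ℝ)
    (x : Fin N → ℝ) : Submodule ℝ (Fin N → ℝ) :=
  ⨅ j ∈ {j | dotL (a j) x = b j}, LinearMap.ker (dotL (a j))

/-- `H` is `(ε,δ)`-superb for the polytope: for every `x` in the polytope and every `y` in the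
polytope with `dim U(y) ≥ εN` there is a 2-dimensional subspace `V ⊆ U(y) ∩ x^⊥` on which the
(normalized) Hessian quadratic form at `x` is at least `2ζ(|x|₂²)√ε − δ`. -/
def IsSuperb {N : ℕ} {J : Type*} [Fintype J] (Pd : ℕ) (γ : ℕ → ℝ) (ε δ : ℝ)
    (a : J → Fin N → ℝ) (b : J → ℝ) (H : (Fin N → ℝ) → ℝ) : Prop :=
  ∀ x ∈ Pset a b, ∀ y ∈ Pset a b,
    ε * N ≤ (Module.finrank ℝ (Uspace a b y) : ℝ) →
    ∃ V : Submodule ℝ (Fin N → ℝ), Module.finrank ℝ V = 2 ∧ V ≤ Uspace a b y ∧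
      (∀ w ∈ V, (∑ i, w i * x i) = 0) ∧
      ∀ w ∈ V, (2 * zeta Pd γ ((∑ i, (x i) ^ 2) / N) * Real.sqrt ε - δ) * (∑ i, (w i) ^ 2) ≤
        (N : ℝ) * iteratedFDeriv ℝ 2 H x ![w, w]

/-- `H` satisfies the `C`-derivative bounds: it is three times continuously differentiable and
its directional derivatives of orders 1, 2, 3 along unit directions (in the normalized norm)
are bounded by `C` on the unit ball. -/
def DerivBounds (N : ℕ) (C : ℝ) (H : (Fin N → ℝ) → ℝ) : Prop :=
  ContDiff ℝ 3 H ∧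
  ∀ σ : Fin N → ℝ, (∑ i, (σ i) ^ 2) / N ≤ 1 →
    ∀ v : Fin N → ℝ, (∑ i, (v i) ^ 2) = (N : ℝ) →
      |fderiv ℝ H σ v| ≤ C ∧ |iteratedFDeriv ℝ 2 H σ ![v, v]| ≤ C ∧
        |iteratedFDeriv ℝ 3 H σ ![v, v, v]| ≤ C



section AuxLemmas

open Real Set

/-- sqrt subadditivity -/
lemma my_sqrt_add_le (x y : ℝ) (hx : 0 ≤ x) (hy : 0 ≤ y) :
    Real.sqrt (x + y) ≤ Real.sqrt x + Real.sqrt y := by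
  have h1 : x + y ≤ (Real.sqrt x + Real.sqrt y) ^ 2 := by
    have hx' := Real.sq_sqrt hx
    have hy' := Real.sq_sqrt hy
    have := Real.sqrt_nonneg x
    have := Real.sqrt_nonneg y
    nlinarith
  calc Real.sqrt (x + y) ≤ Real.sqrt ((Real.sqrt x + Real.sqrt y) ^ 2) := Real.sqrt_le_sqrt h1
  _ = Real.sqrt x + Real.sqrt y := Real.sqrt_sq (by positivity)

lemma my_pow_sub_pow_le (k : ℕ) {a b M : ℝ} (ha : 0 ≤ a) (hab : a ≤ b) (hbM : b ≤ M)
    (hM : 1 ≤ M) : b ^ k - a ^ k ≤ k * M ^ k * (b - a) := by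
  induction k with
  | zero => simp
  | succ k ih =>
    have hM0 : 0 ≤ M := le_trans zero_le_one hM
    have hak : a ^ k ≤ M ^ k := pow_le_pow_left₀ ha (le_trans hab hbM) k
    have hMk : (0:ℝ) ≤ M ^ k := pow_nonneg hM0 k
    have h1 : b ^ (k+1) - a ^ (k+1) = b * (b ^ k - a ^ k) + (b - a) * a ^ k := by ring
    have h2 : b * (b ^ k - a ^ k) ≤ M * (k * M ^ k * (b - a)) := by
      have hbk : 0 ≤ b ^ k - a ^ k := by
        have := pow_le_pow_left₀ ha hab k; linarith
      calc b * (b ^ k - a ^ k) ≤ M * (b ^ k - a ^ k) :=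
            mul_le_mul_of_nonneg_right hbM hbk
      _ ≤ M * (k * M ^ k * (b - a)) := mul_le_mul_of_nonneg_left ih hM0
    have h3 : (b - a) * a ^ k ≤ (b - a) * M ^ k := by
      apply mul_le_mul_of_nonneg_left hak (by linarith)
    have h4 : (b - a) * M ^ k ≤ (b - a) * M ^ (k+1) := by
      apply mul_le_mul_of_nonneg_left _ (by linarith)
      calc M ^ k = 1 * M ^ k := (one_mul _).symm
      _ ≤ M * M ^ k := mul_le_mul_of_nonneg_right hM hMk
      _ = M ^ (k+1) := by ring
    have h5 : M * (↑k * M ^ k * (b - a)) = ↑k * M ^ (k+1) * (b - a) := by ring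
    have h6 : ((k:ℝ) + 1) * M ^ (k+1) * (b - a) = ↑k * M ^ (k+1) * (b-a) + (b-a) * M ^ (k+1) := by
      ring
    push_cast
    linarith [h1, h2, h3, h4, h5, h6]

lemma my_mul_le {K K' Y C : ℝ} (h : K * |Y| ≤ C) (h1 : K * K' = 1) (hK' : 0 ≤ K') :
    |Y| ≤ C * K' := by
  calc |Y| = (K * K') * |Y| := by rw [h1, one_mul]
  _ = K' * (K * |Y|) := by ring
  _ ≤ K' * C := mul_le_mul_of_nonneg_left h hK'
  _ = C * K' := mul_comm _ _

lemma my_le_of_deriv {f f' : ℝ → ℝ} (hf : ∀ t, HasDerivAt f (f' t) t)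
    (h' : ∀ t ∈ Set.Ioo (0:ℝ) 1, 0 ≤ f' t) {s : ℝ} (hs : s ∈ Set.Icc (0:ℝ) 1) :
    f 0 ≤ f s := by
  have hmono : MonotoneOn f (Set.Icc (0:ℝ) 1) := by
    apply monotoneOn_of_deriv_nonneg (convex_Icc 0 1)
    · exact fun t _ => (hf t).continuousAt.continuousWithinAt
    · intro t ht
      exact ((hf t).differentiableAt).differentiableWithinAt
    · intro t ht
      rw [interior_Icc] at ht
      rw [(hf t).deriv]
      exact h' t ht
  exact hmono (Set.left_mem_Icc.2 zero_le_one) hs hs.1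

/-- Taylor lower bound with third-order remainder. -/
lemma my_taylor_lower {N : ℕ} {H : (Fin N → ℝ) → ℝ} (hH : ContDiff ℝ 3 H)
    (σ u : Fin N → ℝ) (M : ℝ)
    (hM : ∀ s ∈ Set.Icc (0:ℝ) 1, |iteratedFDeriv ℝ 3 H (σ + s • u) ![u, u, u]| ≤ M) :
    H σ + fderiv ℝ H σ u + (1/2) * iteratedFDeriv ℝ 2 H σ ![u, u] - M/6 ≤ H (σ + u) := by
  have hline : ∀ t : ℝ, HasDerivAt (fun t : ℝ => σ + t • u) u t := by
    intro t
    have h := ((hasDerivAt_id t).smul_const u).const_add σ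
    simpa using h
  set g1 : ℝ → ℝ := fun t => fderiv ℝ H (σ + t • u) u with hg1def
  set g2 : ℝ → ℝ := fun t => iteratedFDeriv ℝ 2 H (σ + t • u) ![u, u] with hg2def
  set g3 : ℝ → ℝ := fun t => iteratedFDeriv ℝ 3 H (σ + t • u) ![u, u, u] with hg3def
  have hdiff : Differentiable ℝ H := hH.differentiable (by norm_num)
  have hg : ∀ t, HasDerivAt (fun t : ℝ => H (σ + t • u)) (g1 t) t := by
    intro t
    exact (hdiff (σ + t • u)).hasFDerivAt.comp_hasDerivAt t (hline t)
  have hF : ContDiff ℝ 2 (fderiv ℝ H) := hH.fderiv_right (by norm_num)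
  have hg1 : ∀ t, HasDerivAt g1 (g2 t) t := by
    intro t
    have h1 : HasDerivAt (fun t : ℝ => fderiv ℝ H (σ + t • u))
        (fderiv ℝ (fderiv ℝ H) (σ + t • u) u) t :=
      ((hF.differentiable (by norm_num)) (σ + t • u)).hasFDerivAt.comp_hasDerivAt t (hline t)
    have h2 := h1.clm_apply (hasDerivAt_const t u)
    simp only [map_zero, add_zero] at h2
    have h3 : fderiv ℝ (fderiv ℝ H) (σ + t • u) u u = g2 t := by
      show _ = iteratedFDeriv ℝ 2 H (σ + t • u) ![u, u]
      rw [iteratedFDeriv_two_apply]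
      simp
    rw [h3] at h2
    exact h2
  have hG : ContDiff ℝ 1 (iteratedFDeriv ℝ 2 H) := hH.iteratedFDeriv_right (by norm_num)
  have hg2 : ∀ t, HasDerivAt g2 (g3 t) t := by
    intro t
    have h1 : HasDerivAt (fun t : ℝ => iteratedFDeriv ℝ 2 H (σ + t • u))
        (fderiv ℝ (iteratedFDeriv ℝ 2 H) (σ + t • u) u) t :=
      ((hG.differentiable (by norm_num)) (σ + t • u)).hasFDerivAt.comp_hasDerivAt t (hline t)
    have h2 := (ContinuousMultilinearMap.apply ℝ (fun _ : Fin 2 => (Fin N → ℝ)) ℝ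
        ![u, u]).hasFDerivAt.comp_hasDerivAt t h1
    have h3 : (ContinuousMultilinearMap.apply ℝ (fun _ : Fin 2 => (Fin N → ℝ)) ℝ ![u, u])
        (fderiv ℝ (iteratedFDeriv ℝ 2 H) (σ + t • u) u) = g3 t := by
      show _ = iteratedFDeriv ℝ 3 H (σ + t • u) ![u, u, u]
      have h4 : iteratedFDeriv ℝ 3 H (σ + t • u) ![u, u, u] =
          fderiv ℝ (iteratedFDeriv ℝ 2 H) (σ + t • u) (![u,u,u] 0) (Fin.tail ![u, u, u]) :=
        iteratedFDeriv_succ_apply_left ![u, u, u]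
      have h5 : Fin.tail ![u,u,u] = ![u,u] := by
        ext i
        fin_cases i <;> rfl
      rw [h4, ContinuousMultilinearMap.apply_apply, h5]
      simp
    rw [h3] at h2
    exact h2
  have hstep1 : ∀ t ∈ Set.Icc (0:ℝ) 1, g2 0 - M * t ≤ g2 t := by
    intro t ht
    have h := my_le_of_deriv (f := fun t => g2 t + M * t) (f' := fun t => g3 t + M)
      (fun t => (hg2 t).add (by simpa using (hasDerivAt_id t).const_mul M))
      (fun t ht' => by
        show 0 ≤ g3 t + M
        have hb : |g3 t| ≤ M := hM t ⟨le_of_lt ht'.1, le_of_lt ht'.2⟩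
        have := neg_abs_le (g3 t)
        linarith)
      ht
    simp only [mul_zero, add_zero] at h
    linarith
  have hstep2 : ∀ t ∈ Set.Icc (0:ℝ) 1, g1 0 + g2 0 * t - (M/2) * t^2 ≤ g1 t := by
    intro t ht
    have h := my_le_of_deriv (f := fun t => g1 t - g2 0 * t + (M/2) * t^2)
      (f' := fun t => g2 t - g2 0 + M * t)
      (fun t => by
        have h1 := (hg1 t).sub ((hasDerivAt_id t).const_mul (g2 0))
        have h2 := ((hasDerivAt_pow 2 t).const_mul (M/2))
        have h3 := h1.add h2
        refine h3.congr_deriv ?_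
        push_cast; ring)
      (fun t ht' => by
        show 0 ≤ g2 t - g2 0 + M * t
        have := hstep1 t ⟨le_of_lt ht'.1, le_of_lt ht'.2⟩
        linarith)
      ht
    simp only [mul_zero, sub_zero, ne_eq, OfNat.ofNat_ne_zero, not_false_eq_true,
      zero_pow, add_zero] at h
    nlinarith [h]
  have hstep3 := my_le_of_deriv (f := fun t => H (σ + t • u) - g1 0 * t - (g2 0 / 2) * t^2
      + (M/6) * t^3)
    (f' := fun t => g1 t - g1 0 - g2 0 * t + (M/2) * t^2)
    (fun t => by
      have h1 := ((hg t).sub ((hasDerivAt_id t).const_mul (g1 0))).sub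
        ((hasDerivAt_pow 2 t).const_mul (g2 0 / 2))
      have h2 := (hasDerivAt_pow 3 t).const_mul (M/6)
      have h3 := h1.add h2
      refine h3.congr_deriv ?_
      push_cast; ring)
    (fun t ht' => by
      show 0 ≤ g1 t - g1 0 - g2 0 * t + (M/2) * t^2
      have := hstep2 t ⟨le_of_lt ht'.1, le_of_lt ht'.2⟩
      linarith)
    (Set.right_mem_Icc.2 zero_le_one)
  have hz : σ + (0:ℝ) • u = σ := by simp
  have ho : σ + (1:ℝ) • u = σ + u := by simp
  simp only [hz, ho] at hstep3
  have hg10 : g1 0 = fderiv ℝ H σ u := by rw [hg1def]; simp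
  have hg20 : g2 0 = iteratedFDeriv ℝ 2 H σ ![u, u] := by rw [hg2def]; simp
  rw [hg10, hg20] at hstep3
  norm_num at hstep3
  linarith

lemma my_deriv_bounds_scaled {N : ℕ} {C : ℝ} {H : (Fin N → ℝ) → ℝ} (hN : 1 ≤ N)
    (hb : DerivBounds N C H) {σ : Fin N → ℝ} (hσ : (∑ i, (σ i) ^ 2) / N ≤ 1)
    (u : Fin N → ℝ) :
    |fderiv ℝ H σ u| ≤ C * Real.sqrt ((∑ i, (u i) ^ 2) / N) ∧
    |iteratedFDeriv ℝ 2 H σ ![u, u]| ≤ C * ((∑ i, (u i) ^ 2) / N) ∧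
    |iteratedFDeriv ℝ 3 H σ ![u, u, u]| ≤
      C * ((∑ i, (u i) ^ 2) / N) * Real.sqrt ((∑ i, (u i) ^ 2) / N) := by
  have hN0 : (0:ℝ) < N := by exact_mod_cast Nat.lt_of_lt_of_le Nat.zero_lt_one hN
  set s : ℝ := ∑ i, (u i) ^ 2 with hsdef
  have hs0 : 0 ≤ s := Finset.sum_nonneg fun i _ => sq_nonneg _
  rcases eq_or_lt_of_le hs0 with hs | hs
  · have hu : u = 0 := by
      funext i
      have h1 : ∀ j ∈ Finset.univ, (0:ℝ) ≤ (u j)^2 := fun j _ => sq_nonneg _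
      have h2 := (Finset.sum_eq_zero_iff_of_nonneg h1).1 hs.symm i (Finset.mem_univ i)
      exact pow_eq_zero_iff (by norm_num) |>.1 h2
    subst hu
    have e1 : fderiv ℝ H σ (0 : Fin N → ℝ) = 0 := (fderiv ℝ H σ).map_zero
    have e2 : iteratedFDeriv ℝ 2 H σ ![(0 : Fin N → ℝ), 0] = 0 := by
      have : (![(0 : Fin N → ℝ), 0]) 0 = 0 := rfl
      exact (iteratedFDeriv ℝ 2 H σ).map_coord_zero 0 this
    have e3 : iteratedFDeriv ℝ 3 H σ ![(0 : Fin N → ℝ), 0, 0] = 0 := by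
      have : (![(0 : Fin N → ℝ), 0, 0]) 0 = 0 := rfl
      exact (iteratedFDeriv ℝ 3 H σ).map_coord_zero 0 this
    rw [e1, e2, e3, show s = 0 from hs.symm]
    simp
  · have hsN : 0 ≤ s / N := div_nonneg hs0 hN0.le
    set c : ℝ := Real.sqrt ((N : ℝ) / s) with hcdef
    have hc : 0 < c := Real.sqrt_pos.2 (div_pos hN0 hs)
    have hc2 : c ^ 2 = (N : ℝ) / s := Real.sq_sqrt (div_nonneg hN0.le hs0)
    have hcK : c * Real.sqrt (s / N) = 1 := by
      rw [hcdef, ← Real.sqrt_mul (div_nonneg hN0.le hs0)]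
      rw [div_mul_div_comm, mul_comm]
      rw [div_self (by positivity)]
      exact Real.sqrt_one
    have hc2K : c ^ 2 * (s / N) = 1 := by
      rw [hc2]; field_simp
    have hc3K : c ^ 2 * c * ((s / N) * Real.sqrt (s / N)) = 1 := by
      calc c ^ 2 * c * ((s / N) * Real.sqrt (s / N))
          = (c ^ 2 * (s / N)) * (c * Real.sqrt (s / N)) := by ring
      _ = 1 := by rw [hc2K, hcK, one_mul]
    have hv : (∑ i, ((c • u) i) ^ 2) = (N : ℝ) := by
      have : ∀ i, ((c • u) i) ^ 2 = c ^ 2 * (u i) ^ 2 := by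
        intro i; simp [Pi.smul_apply, smul_eq_mul]; ring
      rw [Finset.sum_congr rfl fun i _ => this i, ← Finset.mul_sum, ← hsdef, hc2]
      field_simp
    obtain ⟨B1, B2, B3⟩ := hb.2 σ hσ (c • u) hv
    refine ⟨?_, ?_, ?_⟩
    · have e : fderiv ℝ H σ (c • u) = c * fderiv ℝ H σ u := by
        rw [(fderiv ℝ H σ).map_smul]; rfl
      rw [e, abs_mul, abs_of_pos hc] at B1
      exact my_mul_le B1 hcK (Real.sqrt_nonneg _)
    · have e : iteratedFDeriv ℝ 2 H σ ![c • u, c • u]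
          = c ^ 2 * iteratedFDeriv ℝ 2 H σ ![u, u] := by
        have h1 : ![c • u, c • u] = fun i => c • (![u, u] i) := by
          ext i j
          fin_cases i <;> rfl
        rw [h1]
        have := (iteratedFDeriv ℝ 2 H σ).map_smul_univ (fun _ : Fin 2 => c) ![u, u]
        rw [this]
        simp only [Finset.prod_const, Finset.card_univ, Fintype.card_fin, smul_eq_mul]
      rw [e, abs_mul, abs_of_pos (by positivity : (0:ℝ) < c ^ 2)] at B2
      exact my_mul_le B2 hc2K hsN
    · have e : iteratedFDeriv ℝ 3 H σ ![c • u, c • u, c • u]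
          = (c ^ 2 * c) * iteratedFDeriv ℝ 3 H σ ![u, u, u] := by
        have h1 : ![c • u, c • u, c • u] = fun i => c • (![u, u, u] i) := by
          ext i j
          fin_cases i <;> rfl
        rw [h1]
        have := (iteratedFDeriv ℝ 3 H σ).map_smul_univ (fun _ : Fin 3 => c) ![u, u, u]
        rw [this]
        simp only [Finset.prod_const, Finset.card_univ, Fintype.card_fin, smul_eq_mul]
        ring
      rw [e, abs_mul, abs_of_pos (by positivity : (0:ℝ) < c ^ 2 * c)] at B3
      have := my_mul_le B3 hc3K (by positivity)
      calc |iteratedFDeriv ℝ 3 H σ ![u, u, u]| ≤ C * (s / N * Real.sqrt (s / N)) := this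
      _ = C * (s / N) * Real.sqrt (s / N) := by ring

noncomputable def myL (Pd : ℕ) (γ : ℕ → ℝ) (Mb : ℝ) : ℝ :=
  ∑ p ∈ Finset.Icc 1 Pd, (γ p) ^ 2 * ((p : ℝ) * ((p : ℝ) - 1)) * ((p : ℝ) * Mb ^ p)

lemma my_coeff_nonneg {γ : ℕ → ℝ} {p : ℕ} (hp : 1 ≤ p) :
    0 ≤ (γ p) ^ 2 * ((p : ℝ) * ((p : ℝ) - 1)) := by
  have : (1:ℝ) ≤ (p:ℝ) := by exact_mod_cast hp
  have h1 : (0:ℝ) ≤ (p:ℝ) := by linarith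
  have h2 : (0:ℝ) ≤ (p:ℝ) - 1 := by linarith
  positivity

lemma myL_nonneg (Pd : ℕ) (γ : ℕ → ℝ) {Mb : ℝ} (hMb : 1 ≤ Mb) : 0 ≤ myL Pd γ Mb := by
  apply Finset.sum_nonneg
  intro p hp
  have hp1 : 1 ≤ p := (Finset.mem_Icc.1 hp).1
  have h1 : (1:ℝ) ≤ (p:ℝ) := by exact_mod_cast hp1
  have h2 : (0:ℝ) ≤ (p:ℝ) - 1 := by linarith
  have h3 : (0:ℝ) ≤ (p:ℝ) := by linarith
  have hMb0 : (0:ℝ) ≤ Mb := le_trans zero_le_one hMb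
  have := sq_nonneg (γ p)
  have h4 : (0:ℝ) ≤ Mb ^ p := pow_nonneg hMb0 p
  apply mul_nonneg (mul_nonneg this (mul_nonneg h3 h2)) (mul_nonneg h3 h4)

lemma xiSecond_nonneg (Pd : ℕ) (γ : ℕ → ℝ) {t : ℝ} (ht : 0 ≤ t) :
    0 ≤ xiSecond Pd γ t := by
  apply Finset.sum_nonneg
  intro p hp
  have h := my_coeff_nonneg (γ := γ) (Finset.mem_Icc.1 hp).1
  positivity

lemma xiSecond_mono (Pd : ℕ) (γ : ℕ → ℝ) {s t : ℝ} (hs : 0 ≤ s) (hst : s ≤ t) :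
    xiSecond Pd γ s ≤ xiSecond Pd γ t := by
  apply Finset.sum_le_sum
  intro p hp
  have h := my_coeff_nonneg (γ := γ) (Finset.mem_Icc.1 hp).1
  apply mul_le_mul_of_nonneg_left _ h
  exact pow_le_pow_left₀ hs hst _

lemma zeta_nonneg' (Pd : ℕ) (γ : ℕ → ℝ) (t : ℝ) : 0 ≤ zeta Pd γ t := Real.sqrt_nonneg _

lemma zeta_mono (Pd : ℕ) (γ : ℕ → ℝ) {s t : ℝ} (hs : 0 ≤ s) (hst : s ≤ t) :
    zeta Pd γ s ≤ zeta Pd γ t := Real.sqrt_le_sqrt (xiSecond_mono Pd γ hs hst)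

lemma xiSecond_continuous (Pd : ℕ) (γ : ℕ → ℝ) : Continuous (xiSecond Pd γ) := by
  unfold xiSecond
  apply continuous_finset_sum
  intro p _
  exact continuous_const.mul (continuous_pow _)

lemma zeta_continuous (Pd : ℕ) (γ : ℕ → ℝ) : Continuous (zeta Pd γ) :=
  Real.continuous_sqrt.comp (xiSecond_continuous Pd γ)

lemma xiSecond_sub_le (Pd : ℕ) (γ : ℕ → ℝ) {Mb a b : ℝ} (hMb : 1 ≤ Mb)
    (ha : 0 ≤ a) (hab : a ≤ b) (hbM : b ≤ Mb) :
    xiSecond Pd γ b - xiSecond Pd γ a ≤ myL Pd γ Mb * (b - a) := by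
  unfold xiSecond myL
  rw [← Finset.sum_sub_distrib, Finset.sum_mul]
  apply Finset.sum_le_sum
  intro p hp
  have hc := my_coeff_nonneg (γ := γ) (Finset.mem_Icc.1 hp).1
  have h1 : (γ p)^2 * ((p:ℝ) * ((p:ℝ) - 1)) * b ^ (p-2) -
      (γ p)^2 * ((p:ℝ) * ((p:ℝ) - 1)) * a ^ (p-2)
      = (γ p)^2 * ((p:ℝ) * ((p:ℝ) - 1)) * (b ^ (p-2) - a ^ (p-2)) := by ring
  rw [h1]
  have h2 : b ^ (p-2) - a ^ (p-2) ≤ (p:ℝ) * Mb ^ p * (b - a) := by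
    have h3 := my_pow_sub_pow_le (p-2) ha hab hbM hMb
    have h4 : ((p-2 : ℕ):ℝ) * Mb ^ (p-2) * (b-a) ≤ (p:ℝ) * Mb ^ p * (b - a) := by
      apply mul_le_mul_of_nonneg_right _ (by linarith)
      apply mul_le_mul
      · exact_mod_cast Nat.cast_le.2 (Nat.sub_le p 2)
      · exact pow_le_pow_right₀ hMb (Nat.sub_le p 2)
      · positivity
      · positivity
    linarith
  calc (γ p)^2 * ((p:ℝ) * ((p:ℝ) - 1)) * (b ^ (p-2) - a ^ (p-2))
      ≤ (γ p)^2 * ((p:ℝ) * ((p:ℝ) - 1)) * ((p:ℝ) * Mb ^ p * (b - a)) :=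
        mul_le_mul_of_nonneg_left h2 hc
  _ = (γ p)^2 * ((p:ℝ) * ((p:ℝ) - 1)) * ((p:ℝ) * Mb ^ p) * (b - a) := by ring

lemma zeta_sub_le (Pd : ℕ) (γ : ℕ → ℝ) {Mb a b : ℝ} (hMb : 1 ≤ Mb)
    (ha : 0 ≤ a) (hab : a ≤ b) (hbM : b ≤ Mb) :
    zeta Pd γ b ≤ zeta Pd γ a + Real.sqrt (myL Pd γ Mb * (b - a)) := by
  have h1 : xiSecond Pd γ b ≤ xiSecond Pd γ a + myL Pd γ Mb * (b - a) := by
    have := xiSecond_sub_le Pd γ hMb ha hab hbM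
    linarith
  calc zeta Pd γ b = Real.sqrt (xiSecond Pd γ b) := rfl
  _ ≤ Real.sqrt (xiSecond Pd γ a + myL Pd γ Mb * (b - a)) := Real.sqrt_le_sqrt h1
  _ ≤ Real.sqrt (xiSecond Pd γ a) + Real.sqrt (myL Pd γ Mb * (b - a)) := by
      apply my_sqrt_add_le _ _ (xiSecond_nonneg Pd γ ha)
      have hL := myL_nonneg Pd γ hMb
      have : 0 ≤ b - a := by linarith
      positivity

lemma my_integral_increment (Pd : ℕ) (γ : ℕ → ℝ) {Mb r Δ : ℝ} (hMb : 1 ≤ Mb)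
    (hr : 0 ≤ r) (hΔ : 0 ≤ Δ) (hrΔ : r + Δ ≤ Mb) :
    (∫ t in r..(r + Δ), zeta Pd γ t) ≤
      (zeta Pd γ r + Real.sqrt (myL Pd γ Mb * Δ)) * Δ := by
  have hint : ∀ a b : ℝ, IntervalIntegrable (zeta Pd γ) MeasureTheory.volume a b :=
    fun a b => (zeta_continuous Pd γ).intervalIntegrable a b
  have hbd : ∀ t ∈ Set.Icc r (r + Δ), zeta Pd γ t ≤ zeta Pd γ r + Real.sqrt (myL Pd γ Mb * Δ) := by
    intro t ht
    calc zeta Pd γ t ≤ zeta Pd γ (r + Δ) := zeta_mono Pd γ (le_trans hr ht.1) ht.2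
    _ ≤ zeta Pd γ r + Real.sqrt (myL Pd γ Mb * ((r+Δ) - r)) :=
        zeta_sub_le Pd γ hMb hr (by linarith) hrΔ
    _ = zeta Pd γ r + Real.sqrt (myL Pd γ Mb * Δ) := by ring_nf
  calc (∫ t in r..(r + Δ), zeta Pd γ t)
      ≤ ∫ _t in r..(r + Δ), (zeta Pd γ r + Real.sqrt (myL Pd γ Mb * Δ)) := by
        apply intervalIntegral.integral_mono_on (by linarith) (hint r (r+Δ))
          intervalIntegrable_const hbd
  _ = (zeta Pd γ r + Real.sqrt (myL Pd γ Mb * Δ)) * Δ := by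
      rw [intervalIntegral.integral_const]
      simp [smul_eq_mul]
      ring

end AuxLemmas

set_option maxHeartbeats 2000000 in
/-- deterministic form of Theorem 5 of the paper: for any mixture and
`ε, ε', η, C > 0` there is `δ > 0` such that for any `N ≥ 1`, any polytope presented by
half-spaces and contained in the unit ball, and any `(ε,δ)`-superb `H` with `C`-derivative
bounds, every `x` in the polytope with
`H(x) ≥ max_P H − √ε ∫_{|x|₂²}^{|x|₂²+ε'} ζ(t) dt + η` is within squared distance `ε'` of an
`ε`-corner `xhat` (a point with `dim U(xhat) < εN`). (The near-maximality hypothesis is phrased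
equivalently as a bound on `H(y)` for all `y` in the polytope.) -/
theorem polytope_near_maximizers_near_corners_deterministic
    (Pd : ℕ) (γ : ℕ → ℝ) (hγ : ∀ p, 0 ≤ γ p)
    (hmix : ∃ p, 2 ≤ p ∧ p ≤ Pd ∧ 0 < γ p)
    (ε ε' η C : ℝ) (hε : 0 < ε) (hε' : 0 < ε') (hη : 0 < η) (hC : 0 < C) :
    ∃ δ > (0 : ℝ), ∀ N : ℕ, 1 ≤ N →
      ∀ (J : Type) (_ : Fintype J) (a : J → Fin N → ℝ) (b : J → ℝ),
        Pset a b ⊆ {x : Fin N → ℝ | (∑ i, (x i) ^ 2) / N ≤ 1} →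
        ∀ H : (Fin N → ℝ) → ℝ, DerivBounds N C H → IsSuperb Pd γ ε δ a b H →
        ∀ x ∈ Pset a b,
          (∀ y ∈ Pset a b, H y ≤ H x +
            Real.sqrt ε * (∫ t in ((∑ i, (x i) ^ 2) / N)..((∑ i, (x i) ^ 2) / N + ε'),
              zeta Pd γ t) - η) →
          ∃ xhat ∈ Pset a b, (Module.finrank ℝ (Uspace a b xhat) : ℝ) < ε * N ∧
            (∑ i, (x i - xhat i) ^ 2) / N ≤ ε' := by
  classical
  have hδpos : 0 < η / (4 * ε') := by positivity
  refine ⟨η / (4 * ε'), hδpos, ?_⟩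
  intro N hN J _J a b hball H hDB hsup x hxP hmax
  set δ : ℝ := η / (4 * ε') with hδdef
  have hδ : 0 < δ := hδpos
  have hN0 : (0:ℝ) < N := by exact_mod_cast Nat.lt_of_lt_of_le Nat.zero_lt_one hN
  set Mb : ℝ := max (1 + ε') 1 with hMbdef
  have hMb1 : 1 ≤ Mb := le_max_right _ _
  have hMbε' : 1 + ε' ≤ Mb := le_max_left _ _
  set L' : ℝ := max (myL Pd γ Mb) 1 with hL'def
  have hL'1 : (1:ℝ) ≤ L' := le_max_right _ _
  have hL'0 : (0:ℝ) < L' := lt_of_lt_of_le one_pos hL'1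
  have hLle : myL Pd γ Mb ≤ L' := le_max_left _ _
  set Δ₀ : ℝ := min ((3 * δ / C)^2) (δ^2 / (ε * L')) with hΔ₀def
  have hΔ₀pos : 0 < Δ₀ := lt_min (by positivity) (by positivity)
  set cc : ℝ := δ + Real.sqrt ε * Real.sqrt (L' * Δ₀) with hccdef
  have hsqrtle : Real.sqrt ε * Real.sqrt (L' * Δ₀) ≤ δ := by
    rw [← Real.sqrt_mul hε.le]
    have h2 : Δ₀ ≤ δ^2 / (ε * L') := min_le_right _ _
    have h1 : ε * (L' * Δ₀) ≤ δ ^ 2 := by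
      have h3 : ε * (L' * Δ₀) ≤ ε * (L' * (δ^2 / (ε * L'))) := by
        apply mul_le_mul_of_nonneg_left _ hε.le
        exact mul_le_mul_of_nonneg_left h2 (by linarith)
      have h4 : ε * (L' * (δ^2 / (ε * L'))) = δ^2 := by field_simp
      linarith
    calc Real.sqrt (ε * (L' * Δ₀)) ≤ Real.sqrt (δ^2) := Real.sqrt_le_sqrt h1
    _ = δ := Real.sqrt_sq hδ.le
  have hccpos : 0 < cc := by
    rw [hccdef]
    have := mul_nonneg (Real.sqrt_nonneg ε) (Real.sqrt_nonneg (L' * Δ₀))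
    linarith
  have hccε' : cc * ε' ≤ η / 2 := by
    have h1 : cc ≤ 2 * δ := by rw [hccdef]; linarith
    have h2 : 2 * δ * ε' = η / 2 := by rw [hδdef]; field_simp; ring
    nlinarith [hε'.le]
  set r0 : ℝ := (∑ i, (x i)^2) / N with hr0def
  have hr0nn : 0 ≤ r0 := by
    rw [hr0def]
    have : (0:ℝ) ≤ ∑ i, (x i)^2 := Finset.sum_nonneg fun i _ => sq_nonneg _
    positivity
  have hr0le1 : r0 ≤ 1 := hball hxP
  set D : (Fin N → ℝ) → ℝ := fun σ => (∑ i, (σ i - x i)^2) / N with hDdef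
  have hDnn : ∀ σ, 0 ≤ D σ := by
    intro σ
    have : (0:ℝ) ≤ ∑ i, (σ i - x i)^2 := Finset.sum_nonneg fun i _ => sq_nonneg _
    positivity
  have hDcont : Continuous D :=
    (continuous_finset_sum _ fun i _ =>
      ((continuous_apply i).sub continuous_const).pow 2).div_const _
  set Z : ℝ → ℝ := fun d => ∫ t in r0..(r0 + d), zeta Pd γ t with hZdef
  have hZcont : Continuous Z := by
    have h1 := intervalIntegral.continuous_primitive (f := zeta Pd γ)
      (μ := MeasureTheory.volume)
      (fun a b => (zeta_continuous Pd γ).intervalIntegrable a b) r0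
    exact h1.comp (continuous_const.add continuous_id)
  have hHcont : Continuous H := hDB.1.continuous
  set A : Set (Fin N → ℝ) := {σ | σ ∈ Pset a b ∧ D σ ≤ ε' ∧
      (∑ i, (σ i)^2) = (∑ i, (x i)^2) + (∑ i, (σ i - x i)^2) ∧
      H x + Real.sqrt ε * Z (D σ) - cc * D σ ≤ H σ} with hAdef
  have hdotc : ∀ (aa : Fin N → ℝ), Continuous fun σ : Fin N → ℝ => dotL aa σ := by
    intro aa
    show Continuous fun σ : Fin N → ℝ => (∑ i, aa i * σ i) / (N:ℝ)
    exact (continuous_finset_sum _ fun i _ =>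
      continuous_const.mul (continuous_apply i)).div_const _
  have hPclosed : IsClosed (Pset a b) := by
    have he : Pset a b = ⋂ j, {σ : Fin N → ℝ | dotL (a j) σ ≤ b j} := by
      ext σ; simp [Pset, Set.mem_iInter]
    rw [he]
    exact isClosed_iInter fun j => isClosed_le (hdotc (a j)) continuous_const
  have hsumsq : Continuous fun σ : Fin N → ℝ => ∑ i, (σ i)^2 :=
    continuous_finset_sum _ fun i _ => (continuous_apply i).pow 2
  have hsumsq2 : Continuous fun σ : Fin N → ℝ => ∑ i, (σ i - x i)^2 :=
    continuous_finset_sum _ fun i _ => ((continuous_apply i).sub continuous_const).pow 2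
  have hAclosed : IsClosed A := by
    have he : A = (Pset a b) ∩ ({σ | D σ ≤ ε'} ∩
        ({σ : Fin N → ℝ | (∑ i, (σ i)^2) = (∑ i, (x i)^2) + (∑ i, (σ i - x i)^2)} ∩
         {σ | H x + Real.sqrt ε * Z (D σ) - cc * D σ ≤ H σ})) := by
      ext σ
      exact ⟨fun ⟨h1,h2,h3,h4⟩ => ⟨h1,h2,h3,h4⟩, fun ⟨h1,h2,h3,h4⟩ => ⟨h1,h2,h3,h4⟩⟩
    rw [he]
    refine hPclosed.inter ((isClosed_le hDcont continuous_const).inter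
      ((isClosed_eq hsumsq (continuous_const.add hsumsq2)).inter (isClosed_le ?_ hHcont)))
    exact (continuous_const.add (continuous_const.mul (hZcont.comp hDcont))).sub
      (continuous_const.mul hDcont)
  have hAbdd : Bornology.IsBounded A := by
    apply Bornology.IsBounded.subset (Metric.isBounded_closedBall
      (x := (0 : Fin N → ℝ)) (r := Real.sqrt N))
    intro σ hσA
    have h1 : (∑ i, (σ i)^2) ≤ N := by
      have h2 : (∑ i, (σ i)^2) / (N:ℝ) ≤ 1 := hball hσA.1
      rw [div_le_one hN0] at h2
      exact h2
    simp only [Metric.mem_closedBall, dist_zero_right]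
    rw [pi_norm_le_iff_of_nonneg (Real.sqrt_nonneg _)]
    intro i
    rw [Real.norm_eq_abs, ← Real.sqrt_sq_eq_abs]
    apply Real.sqrt_le_sqrt
    calc (σ i)^2 ≤ ∑ j, (σ j)^2 :=
      Finset.single_le_sum (fun j _ => sq_nonneg (σ j)) (Finset.mem_univ i)
    _ ≤ N := h1
  have hAcomp : IsCompact A := Metric.isCompact_of_isClosed_isBounded hAclosed hAbdd
  have hxA : x ∈ A := by
    refine ⟨hxP, ?_, by simp, ?_⟩
    · have : D x = 0 := by rw [hDdef]; simp
      rw [this]; exact hε'.le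
    · have h1 : D x = 0 := by rw [hDdef]; simp
      rw [h1]
      have h2 : Z 0 = 0 := by rw [hZdef]; simp
      rw [h2]
      simp
  obtain ⟨σs, hσsA, hσsmax⟩ := hAcomp.exists_isMaxOn ⟨x, hxA⟩ hDcont.continuousOn
  obtain ⟨hσsP, hσsε', hσsnorm, hσsH⟩ := hσsA
  by_cases hcor : (Module.finrank ℝ (Uspace a b σs) : ℝ) < ε * N
  · refine ⟨σs, hσsP, hcor, ?_⟩
    have : (∑ i, (x i - σs i)^2) = ∑ i, (σs i - x i)^2 := by
      apply Finset.sum_congr rfl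
      intro i _
      ring
    rw [this]
    exact hσsε'
  · exfalso
    push_neg at hcor
    have hσsball : (∑ i, (σs i)^2) / N ≤ 1 := hball hσsP
    have hnormr : (∑ i, (σs i)^2) / N = r0 + D σs := by
      rw [hσsnorm, hDdef, hr0def]
      push_cast
      rw [add_div]
    rcases lt_or_eq_of_le hσsε' with hDlt | hDeq
    · -- can still make a step: contradiction with maximality
      -- D σs < ε' : construct a strictly better point, contradicting maximality
      obtain ⟨V, hV2, hVU, hVorth, hVhess⟩ := hsup σs hσsP σs hσsP hcor
      -- pick a nonzero w ∈ V orthogonal to x with nonneg gradient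
      obtain ⟨w, hwV, hwne, hwx, hwgrad⟩ : ∃ w : Fin N → ℝ, w ∈ V ∧ w ≠ 0 ∧
          (∑ i, w i * x i) = 0 ∧ 0 ≤ fderiv ℝ H σs w := by
        set φ : V →ₗ[ℝ] ℝ := (dotL x).comp V.subtype with hφdef
        have hrange : Module.finrank ℝ (LinearMap.range φ) ≤ 1 := by
          have h1 := Submodule.finrank_le (LinearMap.range φ)
          simpa using h1
        have hkerpos : 0 < Module.finrank ℝ (LinearMap.ker φ) := by
          have hsum := LinearMap.finrank_range_add_finrank_ker φ
          rw [hV2] at hsum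
          omega
        have hnt : Nontrivial (LinearMap.ker φ) := Module.finrank_pos_iff.1 hkerpos
        obtain ⟨w₀, hw₀ne⟩ := exists_ne (0 : LinearMap.ker φ)
        set w1 : Fin N → ℝ := ((w₀ : V) : Fin N → ℝ) with hw1def
        have hw1V : w1 ∈ V := (w₀ : V).2
        have hw1ne : w1 ≠ 0 := by
          intro h
          apply hw₀ne
          apply Subtype.ext
          apply Subtype.ext
          exact h
        have hw1x : (∑ i, w1 i * x i) = 0 := by
          have h1 : dotL x w1 = 0 := LinearMap.mem_ker.1 w₀.2
          have h2 : (∑ i, x i * w1 i) / (N:ℝ) = 0 := h1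
          have h3 : (∑ i, x i * w1 i) = 0 := by
            field_simp at h2
            simpa using h2
          rw [← h3]
          apply Finset.sum_congr rfl
          intro i _
          ring
        rcases le_or_gt 0 (fderiv ℝ H σs w1) with hsg | hsg
        · exact ⟨w1, hw1V, hw1ne, hw1x, hsg⟩
        · refine ⟨-w1, V.neg_mem hw1V, neg_ne_zero.2 hw1ne, ?_, ?_⟩
          · have : ∀ i, (-w1) i * x i = -(w1 i * x i) := fun i => by simp
            rw [Finset.sum_congr rfl fun i _ => this i, Finset.sum_neg_distrib, hw1x, neg_zero]
          · rw [map_neg]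
            linarith
      -- basic facts about w
      have hwσ : (∑ i, w i * σs i) = 0 := hVorth w hwV
      have hact : ∀ j, dotL (a j) σs = b j → dotL (a j) w = 0 := by
        intro j hj
        have h1 : w ∈ Uspace a b σs := hVU hwV
        simp only [Uspace] at h1
        have h2 := (Submodule.mem_iInf _).1 h1 j
        have h3 := (Submodule.mem_iInf _).1 h2 hj
        exact LinearMap.mem_ker.1 h3
      obtain ⟨sw, hswdef⟩ : ∃ s : ℝ, s = ∑ i, (w i)^2 := ⟨_, rfl⟩
      have hswpos : 0 < sw := by
        have h1 : ∃ i, w i ≠ 0 := by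
          by_contra h
          push_neg at h
          exact hwne (funext h)
        obtain ⟨i0, hi0⟩ := h1
        rw [hswdef]
        apply Finset.sum_pos' (fun i _ => sq_nonneg _)
        exact ⟨i0, Finset.mem_univ i0,
          lt_of_le_of_ne (sq_nonneg _) (Ne.symm (pow_ne_zero 2 hi0))⟩
      -- step size bound
      obtain ⟨m, hmdef⟩ : ∃ s : ℝ, s = min Δ₀ (ε' - D σs) := ⟨_, rfl⟩
      have hmpos : 0 < m := by
        rw [hmdef]
        exact lt_min hΔ₀pos (by linarith)
      -- feasibility along the segment, eventually
      have hfeas : ∀ᶠ t in nhdsWithin (0:ℝ) (Set.Ioi 0),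
          ∀ t' ∈ Set.Icc (0:ℝ) t, σs + t' • w ∈ Pset a b := by
        have hj : ∀ j : J, ∀ᶠ t in nhdsWithin (0:ℝ) (Set.Ioi 0),
            ∀ t' ∈ Set.Icc (0:ℝ) t, dotL (a j) (σs + t' • w) ≤ b j := by
          intro j
          have hlin : ∀ t' : ℝ, dotL (a j) (σs + t' • w)
              = dotL (a j) σs + t' * dotL (a j) w := by
            intro t'
            rw [map_add, map_smul]
            rfl
          rcases eq_or_lt_of_le (hσsP j) with heq | hlt
          · filter_upwards with t t' _
            rw [hlin, hact j heq, mul_zero, add_zero]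
            exact le_of_eq heq
          · obtain ⟨cj, hcjdef⟩ : ∃ c : ℝ, c = dotL (a j) w := ⟨_, rfl⟩
            obtain ⟨tj, htjdef⟩ : ∃ s : ℝ, s = (b j - dotL (a j) σs) / (|cj| + 1) := ⟨_, rfl⟩
            have htj : 0 < tj := by
              rw [htjdef]
              apply div_pos (by linarith) (by positivity)
            filter_upwards [Ioo_mem_nhdsGT_of_mem (Set.left_mem_Ico.2 htj)] with t ht t' ht'
            rw [hlin, ← hcjdef]
            have h1 : t' * cj ≤ t' * |cj| :=
              mul_le_mul_of_nonneg_left (le_abs_self cj) ht'.1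
            have h2 : t' * |cj| ≤ tj * (|cj| + 1) := by
              have ha1 : t' ≤ tj := le_of_lt (lt_of_le_of_lt ht'.2 ht.2)
              have ha2 := abs_nonneg cj
              calc t' * |cj| ≤ tj * |cj| := mul_le_mul_of_nonneg_right ha1 ha2
              _ ≤ tj * (|cj| + 1) := mul_le_mul_of_nonneg_left (by linarith) htj.le
            have h3 : tj * (|cj| + 1) = b j - dotL (a j) σs := by
              rw [htjdef]
              field_simp
            linarith
        have hall := Filter.eventually_all.2 hj
        filter_upwards [hall] with t h t' ht' j
        exact h j t' ht'
      -- smallness of the squared step, eventually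
      have hsmall : ∀ᶠ t in nhdsWithin (0:ℝ) (Set.Ioi 0), t^2 * sw / N < m := by
        have hcont : Continuous fun t : ℝ => t^2 * sw / N :=
          ((continuous_pow 2).mul continuous_const).div_const _
        have htend : Filter.Tendsto (fun t : ℝ => t^2 * sw / N)
            (nhdsWithin (0:ℝ) (Set.Ioi 0)) (nhds 0) := by
          apply Filter.Tendsto.mono_left _
            (nhdsWithin_le_nhds (a := (0:ℝ)) (s := Set.Ioi 0))
          have h1 := hcont.tendsto 0
          simpa using h1
        exact htend.eventually_lt_const hmpos
      obtain ⟨t, ⟨htfeas, htsmall⟩, htpos⟩ :=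
        ((hfeas.and hsmall).and self_mem_nhdsWithin).exists
      obtain ⟨u, hudef⟩ : ∃ u : Fin N → ℝ, u = t • w := ⟨_, rfl⟩
      obtain ⟨Δ, hΔdef⟩ : ∃ d : ℝ, d = t^2 * sw / N := ⟨_, rfl⟩
      have hu2 : (∑ i, (u i)^2) = t^2 * sw := by
        rw [hswdef, Finset.mul_sum]
        apply Finset.sum_congr rfl
        intro i _
        rw [hudef]
        simp [Pi.smul_apply, smul_eq_mul]
        ring
      have hu2N : (∑ i, (u i)^2) / (N:ℝ) = Δ := by rw [hu2, hΔdef]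
      have hΔpos : 0 < Δ := by
        rw [hΔdef]
        have := pow_pos htpos 2
        positivity
      have hΔm : Δ < m := by rw [hΔdef]; exact htsmall
      have hΔΔ₀ : Δ ≤ Δ₀ := by
        have h1 := hΔm
        rw [hmdef] at h1
        exact le_trans h1.le (min_le_left _ _)
      have hΔε' : Δ ≤ ε' - D σs := by
        have h1 := hΔm
        rw [hmdef] at h1
        exact le_trans h1.le (min_le_right _ _)
      have huV : u ∈ V := by
        rw [hudef]
        exact V.smul_mem t hwV
      have hux : (∑ i, u i * x i) = 0 := by
        have : ∀ i, u i * x i = t * (w i * x i) := by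
          intro i; rw [hudef]; simp [Pi.smul_apply, smul_eq_mul]; ring
        rw [Finset.sum_congr rfl fun i _ => this i, ← Finset.mul_sum, hwx, mul_zero]
      have huσ : (∑ i, u i * σs i) = 0 := hVorth u huV
      -- the new point
      obtain ⟨σ', hσ'def⟩ : ∃ z : Fin N → ℝ, z = σs + u := ⟨_, rfl⟩
      have hσ'P : σ' ∈ Pset a b := by
        rw [hσ'def, hudef]
        exact htfeas t ⟨htpos.le, le_rfl⟩
      have S1 : (∑ i, (σ' i)^2) = (∑ i, (σs i)^2) + (∑ i, (u i)^2) := by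
        have e : ∀ i, (σ' i)^2 = (σs i)^2 + (u i)^2 + 2 * (u i * σs i) := by
          intro i
          rw [hσ'def]
          simp [Pi.add_apply]
          ring
        rw [Finset.sum_congr rfl fun i _ => e i, Finset.sum_add_distrib,
          Finset.sum_add_distrib, ← Finset.mul_sum, huσ, mul_zero, add_zero]
      have S2 : (∑ i, (σ' i - x i)^2)
          = (∑ i, (σs i - x i)^2) + (∑ i, (u i)^2) := by
        have e : ∀ i, (σ' i - x i)^2 = (σs i - x i)^2 + (u i)^2
            + (2 * (u i * σs i) - 2 * (u i * x i)) := by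
          intro i
          rw [hσ'def]
          simp [Pi.add_apply]
          ring
        rw [Finset.sum_congr rfl fun i _ => e i, Finset.sum_add_distrib,
          Finset.sum_add_distrib, Finset.sum_sub_distrib, ← Finset.mul_sum, ← Finset.mul_sum,
          huσ, hux]
        ring
      have hDσ' : D σ' = D σs + Δ := by
        show (∑ i, (σ' i - x i)^2) / (N:ℝ) = _
        rw [S2, add_div, hu2N]
      have hσ'norm : (∑ i, (σ' i)^2) = (∑ i, (x i)^2) + (∑ i, (σ' i - x i)^2) := by
        rw [S1, S2, hσsnorm]
        ring
      -- gradient term nonneg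
      have hgrad : 0 ≤ fderiv ℝ H σs u := by
        have : fderiv ℝ H σs u = t * fderiv ℝ H σs w := by
          rw [hudef, (fderiv ℝ H σs).map_smul]
          rfl
        rw [this]
        exact mul_nonneg htpos.le hwgrad
      -- Hessian lower bound
      obtain ⟨zr, hzrdef⟩ : ∃ z : ℝ, z = zeta Pd γ (r0 + D σs) := ⟨_, rfl⟩
      have hzrnn : 0 ≤ zr := by rw [hzrdef]; exact zeta_nonneg' Pd γ _
      have hhess : (2 * zr * Real.sqrt ε - δ) * Δ ≤ iteratedFDeriv ℝ 2 H σs ![u, u] := by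
        have h1 := hVhess u huV
        rw [hnormr, ← hzrdef] at h1
        have h2 : (2 * zr * Real.sqrt ε - δ) * Δ
            = ((2 * zr * Real.sqrt ε - δ) * (∑ i, (u i)^2)) / N := by
          rw [← hu2N]
          ring
        rw [h2]
        rw [div_le_iff₀ hN0]
        linarith [h1]
      -- Taylor bound
      obtain ⟨MM, hMMdef⟩ : ∃ z : ℝ, z = C * Δ * Real.sqrt Δ := ⟨_, rfl⟩
      have hM : ∀ s ∈ Set.Icc (0:ℝ) 1,
          |iteratedFDeriv ℝ 3 H (σs + s • u) ![u, u, u]| ≤ MM := by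
        intro s hs
        have hmem : σs + s • u ∈ Pset a b := by
          have he : σs + s • u = σs + (s * t) • w := by
            rw [hudef, smul_smul]
          rw [he]
          apply htfeas (s * t)
          constructor
          · exact mul_nonneg hs.1 htpos.le
          · calc s * t ≤ 1 * t := mul_le_mul_of_nonneg_right hs.2 htpos.le
            _ = t := one_mul t
        have hb3 := (my_deriv_bounds_scaled hN hDB (hball hmem) u).2.2
        rw [hu2N] at hb3
        rw [hMMdef]
        exact hb3
      have htay := my_taylor_lower hDB.1 σs u MM hM
      -- H gain in the step
      have hMMsmall : MM / 6 ≤ (δ / 2) * Δ := by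
        have h1 : Real.sqrt Δ ≤ 3 * δ / C := by
          calc Real.sqrt Δ ≤ Real.sqrt Δ₀ := Real.sqrt_le_sqrt hΔΔ₀
          _ ≤ Real.sqrt ((3 * δ / C)^2) :=
              Real.sqrt_le_sqrt (min_le_left _ _)
          _ = 3 * δ / C := Real.sqrt_sq (by positivity)
        have h2 : C * Real.sqrt Δ ≤ 3 * δ := by
          rw [le_div_iff₀ hC] at h1
          calc C * Real.sqrt Δ = Real.sqrt Δ * C := mul_comm _ _
          _ ≤ 3 * δ := h1
        have h3 : C * Δ * Real.sqrt Δ ≤ 3 * δ * Δ := by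
          calc C * Δ * Real.sqrt Δ = (C * Real.sqrt Δ) * Δ := by ring
          _ ≤ (3 * δ) * Δ := mul_le_mul_of_nonneg_right h2 hΔpos.le
          _ = 3 * δ * Δ := rfl
        rw [hMMdef]
        linarith
      have hgain : H σs + (zr * Real.sqrt ε - δ) * Δ ≤ H σ' := by
        have h1 : (1:ℝ)/2 * ((2 * zr * Real.sqrt ε - δ) * Δ)
            = (zr * Real.sqrt ε - δ/2) * Δ := by ring
        have h2 : (1:ℝ)/2 * ((2 * zr * Real.sqrt ε - δ) * Δ)
            ≤ (1:ℝ)/2 * iteratedFDeriv ℝ 2 H σs ![u, u] := by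
          apply mul_le_mul_of_nonneg_left hhess
          norm_num
        have h3 : (zr * Real.sqrt ε - δ) * Δ = (zr * Real.sqrt ε - δ/2) * Δ - (δ/2) * Δ := by
          ring
        rw [hσ'def]
        calc H σs + (zr * Real.sqrt ε - δ) * Δ
            = H σs + (zr * Real.sqrt ε - δ/2) * Δ - (δ/2) * Δ := by rw [h3]; ring
        _ ≤ H σs + fderiv ℝ H σs u + (1:ℝ)/2 * iteratedFDeriv ℝ 2 H σs ![u, u] - MM/6 := by
            linarith [hgrad, h2, h1, hMMsmall]
        _ ≤ H (σs + u) := by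
            have := htay
            linarith [this]
      -- integral increment bound
      have hZinc : Z (D σs + Δ) ≤ Z (D σs)
          + (zr + Real.sqrt (L' * Δ)) * Δ := by
        have hadd : Z (D σs) + (∫ s in (r0 + D σs)..(r0 + D σs + Δ), zeta Pd γ s)
            = Z (D σs + Δ) := by
          rw [hZdef]
          show (∫ s in r0..(r0 + D σs), zeta Pd γ s)
              + (∫ s in (r0 + D σs)..(r0 + D σs + Δ), zeta Pd γ s)
              = ∫ s in r0..(r0 + (D σs + Δ)), zeta Pd γ s
          rw [intervalIntegral.integral_add_adjacent_intervals
            ((zeta_continuous Pd γ).intervalIntegrable _ _)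
            ((zeta_continuous Pd γ).intervalIntegrable _ _)]
          congr 1
          ring
        have hinc : (∫ s in (r0 + D σs)..(r0 + D σs + Δ), zeta Pd γ s)
            ≤ (zr + Real.sqrt (L' * Δ)) * Δ := by
          have h1 := my_integral_increment Pd γ (Mb := Mb) (r := r0 + D σs) (Δ := Δ)
            hMb1 (by linarith [hDnn σs]) hΔpos.le (by linarith [hr0le1, hΔε'])
          have h2 : Real.sqrt (myL Pd γ Mb * Δ) ≤ Real.sqrt (L' * Δ) :=
            Real.sqrt_le_sqrt (mul_le_mul_of_nonneg_right hLle hΔpos.le)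
          have h3 : (zeta Pd γ (r0 + D σs) + Real.sqrt (myL Pd γ Mb * Δ)) * Δ
              ≤ (zr + Real.sqrt (L' * Δ)) * Δ := by
            rw [hzrdef]
            apply mul_le_mul_of_nonneg_right _ hΔpos.le
            linarith [h2]
          linarith [h1, h3]
        linarith [hadd, hinc]
      -- bound the modulus term
      have hmod : Real.sqrt ε * Real.sqrt (L' * Δ) * Δ ≤ (cc - δ) * Δ := by
        have h1 : Real.sqrt (L' * Δ) ≤ Real.sqrt (L' * Δ₀) :=
          Real.sqrt_le_sqrt (mul_le_mul_of_nonneg_left hΔΔ₀ hL'0.le)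
        have h2 : Real.sqrt ε * Real.sqrt (L' * Δ) ≤ Real.sqrt ε * Real.sqrt (L' * Δ₀) :=
          mul_le_mul_of_nonneg_left h1 (Real.sqrt_nonneg ε)
        have h3 : cc - δ = Real.sqrt ε * Real.sqrt (L' * Δ₀) := by
          rw [hccdef]; ring
        rw [h3]
        exact mul_le_mul_of_nonneg_right h2 hΔpos.le
      -- the new point is in A
      have hσ'H : H x + Real.sqrt ε * Z (D σ') - cc * D σ' ≤ H σ' := by
        rw [hDσ']
        have hse : (0:ℝ) ≤ Real.sqrt ε := Real.sqrt_nonneg ε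
        have h1 : Real.sqrt ε * Z (D σs + Δ)
            ≤ Real.sqrt ε * Z (D σs) + Real.sqrt ε * zr * Δ
              + Real.sqrt ε * Real.sqrt (L' * Δ) * Δ := by
          have := mul_le_mul_of_nonneg_left hZinc hse
          calc Real.sqrt ε * Z (D σs + Δ)
              ≤ Real.sqrt ε * (Z (D σs) + (zr + Real.sqrt (L' * Δ)) * Δ) := this
          _ = Real.sqrt ε * Z (D σs) + Real.sqrt ε * zr * Δ
              + Real.sqrt ε * Real.sqrt (L' * Δ) * Δ := by ring
        have h4 : zr * Real.sqrt ε * Δ = Real.sqrt ε * zr * Δ := by ring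
        have h5 : cc * (D σs + Δ) = cc * D σs + cc * Δ := by ring
        have hgain' : H σs + zr * Real.sqrt ε * Δ - δ * Δ ≤ H σ' := by
          have : (zr * Real.sqrt ε - δ) * Δ = zr * Real.sqrt ε * Δ - δ * Δ := by ring
          linarith [hgain, this.ge, this.le]
        have hccδΔ : (cc - δ) * Δ = cc * Δ - δ * Δ := by ring
        linarith [h1, hσsH, hmod, h4.le, h4.ge, h5.le, h5.ge, hgain', hccδΔ.le, hccδΔ.ge]
      have hσ'A : σ' ∈ A := by
        refine ⟨hσ'P, ?_, hσ'norm, hσ'H⟩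
        rw [hDσ']
        linarith [hΔε']
      have hcontra := hσsmax hσ'A
      simp only [Set.mem_setOf_eq] at hcontra
      have : D σ' ≤ D σs := hcontra
      rw [hDσ'] at this
      linarith [hΔpos]
    · -- D σs = ε' : contradiction with near-maximality
      have h1 : H x + Real.sqrt ε * Z ε' - cc * ε' ≤ H σs := by rw [← hDeq]; exact hσsH
      have hZe : Z ε' = ∫ t in r0..(r0 + ε'), zeta Pd γ t := rfl
      rw [hZe] at h1
      have h2 := hmax σs hσsP
      have h3 := le_trans h1 h2
      have h4 : η ≤ cc * ε' := by linarith [h3]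
      have h5 : η ≤ η / 2 := le_trans h4 hccε'
      linarith [hη, h5]
end

section
/- Let P ⊆ ℝ^N be a polytope presented by half-spaces contained in the unit ball {x : |x|₂ ≤ 1}, and let H : ℝ^N → ℝ be (ε,δ)-superb for P and satisfy the C-derivative bounds, for some ε, δ, C > 0. Then for every x ∈ P which is not an ε-corner of P and every x⁰ ∈ P there exists a nonzero vector v ∈ ℝ^N with ⟨v,x⟩ = 0 and ⟨v,x⁰⟩ = 0 such that: (1) x + v ∈ P; (2) J(x) ⊆ J(x+v), i.e. x + v lies in every face of P whose minimal face contains x; (3) H(x+v) − H(x) ≥ (ζ(|x|₂²)·√ε − δ)·|v|₂²; (4) |v|₂ ≤ δ/(10C); and (5) either |v|₂ = δ/(10C) or dim U(x+v) < dim U(x). -/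
set_option maxHeartbeats 1600000

private lemma hasDerivAt_line' {N n : ℕ} {H : (Fin N → ℝ) → ℝ}
    (hH : ContDiff ℝ ((n : ℕ∞) + 1) H) (x w : Fin N → ℝ) (s : ℝ) :
    HasDerivAt (fun s : ℝ => iteratedFDeriv ℝ n H (x + s • w) (fun _ => w))
      (iteratedFDeriv ℝ (n + 1) H (x + s • w) (fun _ => w)) s := by
  have hL : HasDerivAt (fun s : ℝ => x + s • w) w s := by
    simpa using ((hasDerivAt_id s).smul_const w).const_add x
  have hF : ContDiff ℝ 1 (iteratedFDeriv ℝ n H) :=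
    hH.iteratedFDeriv_right (by rw [add_comm]; exact_mod_cast le_rfl)
  have hFd : HasFDerivAt (iteratedFDeriv ℝ n H)
      (fderiv ℝ (iteratedFDeriv ℝ n H) (x + s • w)) (x + s • w) :=
    (hF.differentiable one_ne_zero _).hasFDerivAt
  have hcomp := hFd.comp_hasDerivAt s hL
  have he := ((ContinuousMultilinearMap.apply ℝ (fun _ : Fin n => (Fin N → ℝ)) ℝ
    (fun _ => w)).hasFDerivAt.comp_hasDerivAt s hcomp)
  have key : iteratedFDeriv ℝ (n + 1) H (x + s • w) (fun _ => w)
      = (ContinuousMultilinearMap.apply ℝ (fun _ : Fin n => (Fin N → ℝ)) ℝ (fun _ => w))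
        (fderiv ℝ (iteratedFDeriv ℝ n H) (x + s • w) w) := by
    have : (fun _ : Fin (n+1) => w) = Fin.cons w (fun _ : Fin n => w) := by
      funext i; refine Fin.cases ?_ ?_ i <;> simp
    rw [this, iteratedFDeriv_succ_apply_left]
    simp [Fin.tail]
  rw [key]
  exact he

private lemma mono_aux' {f f' : ℝ → ℝ} {t : ℝ} (ht : 0 ≤ t)
    (hd : ∀ s, HasDerivAt f (f' s) s)
    (h0 : ∀ s ∈ Set.Icc (0:ℝ) t, 0 ≤ f' s) : f 0 ≤ f t := by
  have hcont : ContinuousOn f (Set.Icc 0 t) :=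
    fun s _ => ((hd s).continuousAt).continuousWithinAt
  have hdiff : DifferentiableOn ℝ f (interior (Set.Icc 0 t)) :=
    fun s _ => ((hd s).differentiableAt).differentiableWithinAt
  exact monotoneOn_of_deriv_nonneg (convex_Icc 0 t) hcont hdiff
    (fun s hs => by rw [(hd s).deriv]; exact h0 s (interior_subset hs))
    (Set.left_mem_Icc.2 ht) (Set.right_mem_Icc.2 ht) ht

private lemma taylor_lower' {N : ℕ} {H : (Fin N → ℝ) → ℝ} (hH : ContDiff ℝ 3 H)
    (x w : Fin N → ℝ) {t C : ℝ} (ht : 0 ≤ t)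
    (h3 : ∀ s ∈ Set.Icc (0:ℝ) t, |iteratedFDeriv ℝ 3 H (x + s • w) (fun _ => w)| ≤ C) :
    H x + (fderiv ℝ H x w) * t + (iteratedFDeriv ℝ 2 H x (fun _ => w)) * t^2/2 - C * t^3/6
      ≤ H (x + t • w) := by
  set G : ℕ → ℝ → ℝ := fun n s => iteratedFDeriv ℝ n H (x + s • w) (fun _ => w) with hG
  have hd0 : ∀ s, HasDerivAt (G 0) (G 1 s) s :=
    hasDerivAt_line' (n := 0) (hH.of_le (by norm_num)) x w
  have hd1 : ∀ s, HasDerivAt (G 1) (G 2 s) s :=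
    hasDerivAt_line' (n := 1) (hH.of_le (by norm_num)) x w
  have hd2 : ∀ s, HasDerivAt (G 2) (G 3 s) s :=
    hasDerivAt_line' (n := 2) (hH.of_le (by norm_num)) x w
  have hp1 : ∀ c : ℝ, ∀ s : ℝ, HasDerivAt (fun s : ℝ => c * s) c s := fun c s => by
    simpa using (hasDerivAt_id s).const_mul c
  have hp2 : ∀ c : ℝ, ∀ s : ℝ, HasDerivAt (fun s : ℝ => c * s^2/2) (c * s) s := fun c s => by
    have h := ((hasDerivAt_pow 2 s).const_mul c).div_const 2
    exact h.congr_deriv (by norm_num; ring)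
  have hp3 : ∀ c : ℝ, ∀ s : ℝ, HasDerivAt (fun s : ℝ => c * s^3/6) (c * s^2/2) s := fun c s => by
    have h := ((hasDerivAt_pow 3 s).const_mul c).div_const 6
    exact h.congr_deriv (by norm_num; ring)
  set θ : ℝ → ℝ := fun s => G 2 s - G 2 0 + C * s with hθdef
  set ψ : ℝ → ℝ := fun s => G 1 s - G 1 0 - G 2 0 * s + C * s^2/2 with hψdef
  set χ : ℝ → ℝ := fun s => G 0 s - G 0 0 - G 1 0 * s - G 2 0 * s^2/2 + C * s^3/6 with hχdef
  have hθd : ∀ s, HasDerivAt θ (G 3 s + C) s := fun s =>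
    ((hd2 s).sub_const _).add (hp1 C s)
  have hψd : ∀ s, HasDerivAt ψ (θ s) s := fun s =>
    (((hd1 s).sub_const _).sub (hp1 (G 2 0) s)).add (hp2 C s)
  have hχd : ∀ s, HasDerivAt χ (ψ s) s := fun s =>
    ((((hd0 s).sub_const _).sub (hp1 (G 1 0) s)).sub (hp2 (G 2 0) s)).add (hp3 C s)
  have hθ0 : θ 0 = 0 := by simp [hθdef]
  have hψ0 : ψ 0 = 0 := by simp [hψdef]
  have hχ0 : χ 0 = 0 := by simp [hχdef]
  have hθpos : ∀ s ∈ Set.Icc (0:ℝ) t, 0 ≤ θ s := by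
    intro s hs
    have := mono_aux' hs.1 hθd (fun u hu => by
      have hu' : u ∈ Set.Icc (0:ℝ) t := ⟨hu.1, hu.2.trans hs.2⟩
      have := (abs_le.1 (h3 u hu')).1
      linarith)
    linarith [hθ0 ▸ this]
  have hψpos : ∀ s ∈ Set.Icc (0:ℝ) t, 0 ≤ ψ s := by
    intro s hs
    have := mono_aux' hs.1 hψd (fun u hu => hθpos u ⟨hu.1, hu.2.trans hs.2⟩)
    linarith [hψ0 ▸ this]
  have hχt : 0 ≤ χ t := by
    have := mono_aux' ht hχd (fun u hu => hψpos u hu)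
    linarith [hχ0 ▸ this]
  have hG00 : G 0 0 = H x := by simp [hG]
  have hG0t : G 0 t = H (x + t • w) := by simp [hG]
  have hG10 : G 1 0 = fderiv ℝ H x w := by
    simp [hG, iteratedFDeriv_one_apply]
  have hG20 : G 2 0 = iteratedFDeriv ℝ 2 H x (fun _ => w) := by simp [hG]
  rw [← hG00, ← hG0t, ← hG10, ← hG20]
  simp only [hχdef] at hχt
  linarith

private lemma dotL_apply' {N : ℕ} (a v : Fin N → ℝ) : dotL a v = (∑ i, a i * v i) / N := rfl

private lemma mem_Uspace' {N : ℕ} {J : Type*} {a : J → Fin N → ℝ} {b : J → ℝ}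
    {y z : Fin N → ℝ} :
    z ∈ Uspace a b y ↔ ∀ j, dotL (a j) y = b j → dotL (a j) z = 0 := by
  simp [Uspace, Submodule.mem_iInf, LinearMap.mem_ker, Set.mem_setOf_eq]

private lemma sum_smul_mul' {N : ℕ} (c : ℝ) (z y : Fin N → ℝ) :
    (∑ i, (c • z) i * y i) = c * ∑ i, z i * y i := by
  rw [Finset.mul_sum]
  exact Finset.sum_congr rfl fun i _ => by simp only [Pi.smul_apply, smul_eq_mul]; ring

private lemma sum_smul_sq' {N : ℕ} (c : ℝ) (z : Fin N → ℝ) :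
    (∑ i, ((c • z) i)^2) = c^2 * ∑ i, (z i)^2 := by
  rw [Finset.mul_sum]
  exact Finset.sum_congr rfl fun i _ => by simp only [Pi.smul_apply, smul_eq_mul]; ring

/-- Lemma 7 of the paper: from any point of the polytope which is not an
`ε`-corner, an `(ε,δ)`-superb Hamiltonian with `C`-derivative bounds admits an improvement
step `v` orthogonal to both `x` and a given reference point `x⁰`. -/
theorem polytope_increment_step
    (N Pd : ℕ) (γ : ℕ → ℝ) (hγ : ∀ p, 0 ≤ γ p)
    (hmix : ∃ p, 2 ≤ p ∧ p ≤ Pd ∧ 0 < γ p)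
    (ε δ C : ℝ) (hε : 0 < ε) (hδ : 0 < δ) (hC : 0 < C)
    (J : Type) [Fintype J] (a : J → Fin N → ℝ) (b : J → ℝ)
    (hball : Pset a b ⊆ {x : Fin N → ℝ | (∑ i, (x i) ^ 2) / N ≤ 1})
    (H : (Fin N → ℝ) → ℝ) (hsuperb : IsSuperb Pd γ ε δ a b H) (hbd : DerivBounds N C H)
    (x : Fin N → ℝ) (hx : x ∈ Pset a b)
    (hnotcorner : ε * N ≤ (Module.finrank ℝ (Uspace a b x) : ℝ))
    (x0 : Fin N → ℝ) (hx0 : x0 ∈ Pset a b) :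
    ∃ v : Fin N → ℝ, v ≠ 0 ∧ (∑ i, v i * x i) = 0 ∧ (∑ i, v i * x0 i) = 0 ∧
      x + v ∈ Pset a b ∧
      (∀ j, dotL (a j) x = b j → dotL (a j) (x + v) = b j) ∧
      (zeta Pd γ ((∑ i, (x i) ^ 2) / N) * Real.sqrt ε - δ) * ((∑ i, (v i) ^ 2) / N) ≤
        H (x + v) - H x ∧
      Real.sqrt ((∑ i, (v i) ^ 2) / N) ≤ δ / (10 * C) ∧
      (Real.sqrt ((∑ i, (v i) ^ 2) / N) = δ / (10 * C) ∨
        Module.finrank ℝ (Uspace a b (x + v)) < Module.finrank ℝ (Uspace a b x)) := by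
  classical
  obtain ⟨V, hV2, hVU, hVx, hVhess⟩ := hsuperb x hx x hx hnotcorner
  have hN2 : 2 ≤ N := by
    have h := Submodule.finrank_le V
    rw [Module.finrank_fin_fun] at h
    omega
  have hNpos : (0:ℝ) < N := by exact_mod_cast Nat.lt_of_lt_of_le (by norm_num) hN2
  -- find w ∈ V, w ≠ 0, orthogonal to x0
  set f : V →ₗ[ℝ] ℝ := (dotL x0).comp V.subtype with hf
  have hrk := LinearMap.finrank_range_add_finrank_ker f
  rw [hV2] at hrk
  have hr1 : Module.finrank ℝ (LinearMap.range f) ≤ 1 := by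
    have := Submodule.finrank_le (LinearMap.range f)
    simpa using this
  have hkerpos : 0 < Module.finrank ℝ (LinearMap.ker f) := by omega
  have hkerne : LinearMap.ker f ≠ ⊥ := by
    intro h; rw [h] at hkerpos; simp at hkerpos
  obtain ⟨w0, hw0ker, hw0ne⟩ := Submodule.exists_mem_ne_zero_of_ne_bot hkerne
  set w : Fin N → ℝ := (w0 : Fin N → ℝ) with hwdef
  have hwV : w ∈ V := w0.2
  have hwne : w ≠ 0 := fun h => hw0ne (Subtype.ext h)
  have hwx0 : (∑ i, w i * x0 i) = 0 := by
    have h1 : dotL x0 w = 0 := hw0ker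
    rw [dotL_apply'] at h1
    rw [div_eq_zero_iff] at h1
    have h2 : (∑ i, x0 i * w i) = 0 := by
      rcases h1 with h | h
      · exact h
      · exact absurd h hNpos.ne'
    rw [← h2]; exact Finset.sum_congr rfl fun i _ => mul_comm _ _
  -- normalize
  set Q : ℝ := ∑ i, (w i)^2 with hQdef
  have hQpos : 0 < Q := by
    obtain ⟨i0, hi0⟩ := Function.ne_iff.1 hwne
    have h1 : 0 < (w i0)^2 := pow_two_pos_of_ne_zero hi0
    exact lt_of_lt_of_le h1 (Finset.single_le_sum (fun i _ => sq_nonneg (w i))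
      (Finset.mem_univ i0))
  set c : ℝ := Real.sqrt ((N:ℝ)/Q) with hcdef
  have hcpos : 0 < c := Real.sqrt_pos.2 (div_pos hNpos hQpos)
  have hc2 : c^2 = (N:ℝ)/Q := Real.sq_sqrt (div_pos hNpos hQpos).le
  set wh : Fin N → ℝ := c • w with hwhdef
  have hwh2 : (∑ i, (wh i)^2) = (N:ℝ) := by
    rw [hwhdef, sum_smul_sq', hc2, ← hQdef, div_mul_cancel₀ _ hQpos.ne']
  have hwhV : wh ∈ V := V.smul_mem c hwV
  have hwhx0 : (∑ i, wh i * x0 i) = 0 := by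
    rw [hwhdef, sum_smul_mul', hwx0, mul_zero]
  have hwhne : wh ≠ 0 := smul_ne_zero hcpos.ne' hwne
  -- sign choice
  obtain ⟨u, huV, hu2N, hux0, hfd, hune⟩ :
      ∃ u, u ∈ V ∧ (∑ i, (u i)^2) = (N:ℝ) ∧ (∑ i, u i * x0 i) = 0 ∧
        0 ≤ fderiv ℝ H x u ∧ u ≠ 0 := by
    rcases le_or_gt 0 (fderiv ℝ H x wh) with hs | hs
    · exact ⟨wh, hwhV, hwh2, hwhx0, hs, hwhne⟩
    · refine ⟨(-1 : ℝ) • wh, V.smul_mem _ hwhV, ?_, ?_, ?_, ?_⟩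
      · rw [sum_smul_sq', hwh2]; ring
      · rw [sum_smul_mul', hwhx0, mul_zero]
      · rw [map_smul, smul_eq_mul]; nlinarith
      · exact smul_ne_zero (by norm_num) hwhne
  have hux : (∑ i, u i * x i) = 0 := hVx u huV
  have huU : u ∈ Uspace a b x := hVU huV
  have hukera : ∀ j, dotL (a j) x = b j → dotL (a j) u = 0 := mem_Uspace'.1 huU
  -- Hessian bound
  have e2 : ![u, u] = (fun _ : Fin 2 => u) := by
    funext i; fin_cases i <;> rfl
  have hQ2 : 2 * zeta Pd γ ((∑ i, (x i) ^ 2) / N) * Real.sqrt ε - δ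
      ≤ iteratedFDeriv ℝ 2 H x (fun _ => u) := by
    have hh := hVhess u huV
    rw [hu2N, e2] at hh
    nlinarith [hh]
  -- step length
  set r : ℝ := δ / (10 * C) with hrdef
  have hrpos : 0 < r := by rw [hrdef]; positivity
  set S : Finset J := Finset.univ.filter (fun j => 0 < dotL (a j) u) with hSdef
  set ratio : J → ℝ := fun j => (b j - dotL (a j) x) / (dotL (a j) u) with hratiodef
  have hratio_pos : ∀ j ∈ S, 0 < ratio j := by
    intro j hj
    have hd : 0 < dotL (a j) u := (Finset.mem_filter.1 hj).2
    have hlt : dotL (a j) x < b j := by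
      rcases lt_or_eq_of_le (hx j) with h | h
      · exact h
      · rw [hukera j h] at hd; exact absurd hd (lt_irrefl 0)
    exact div_pos (by linarith) hd
  set t : ℝ := if h : S.Nonempty then min r (S.inf' h ratio) else r with htdef
  have htpos : 0 < t := by
    rw [htdef]; split_ifs with h
    · exact lt_min hrpos ((Finset.lt_inf'_iff h).2 fun j hj => hratio_pos j hj)
    · exact hrpos
  have htler : t ≤ r := by
    rw [htdef]; split_ifs with h
    · exact min_le_left _ _
    · exact le_rfl
  have htratio : ∀ j ∈ S, t ≤ ratio j := by
    intro j hj
    rw [htdef]; split_ifs with h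
    · exact (min_le_right _ _).trans (Finset.inf'_le ratio hj)
    · exact absurd ⟨j, hj⟩ h
  have htcases : t = r ∨ ∃ j ∈ S, t = ratio j := by
    rw [htdef]; split_ifs with h
    · obtain ⟨j, hj, e⟩ := Finset.exists_mem_eq_inf' h ratio
      rcases le_total r (S.inf' h ratio) with h' | h'
      · exact Or.inl (min_eq_left h')
      · exact Or.inr ⟨j, hj, (min_eq_right h').trans e⟩
    · exact Or.inl rfl
  -- feasibility
  have hexp : ∀ (s : ℝ) j, dotL (a j) (x + s • u) = dotL (a j) x + s * dotL (a j) u := by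
    intro s j; rw [map_add, map_smul, smul_eq_mul]
  have hfeas : ∀ s : ℝ, 0 ≤ s → s ≤ t → x + s • u ∈ Pset a b := by
    intro s hs0 hst j
    rw [hexp]
    by_cases hd : 0 < dotL (a j) u
    · have hjS : j ∈ S := Finset.mem_filter.2 ⟨Finset.mem_univ j, hd⟩
      have h1 : s * dotL (a j) u ≤ ratio j * dotL (a j) u :=
        mul_le_mul_of_nonneg_right (hst.trans (htratio j hjS)) hd.le
      have h2 : ratio j * dotL (a j) u = b j - dotL (a j) x := by
        rw [hratiodef]; exact div_mul_cancel₀ _ (ne_of_gt hd)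
      have := hx j
      linarith
    · push_neg at hd
      have h1 : s * dotL (a j) u ≤ 0 := mul_nonpos_of_nonneg_of_nonpos hs0 hd
      have := hx j
      linarith
  have hpreserve : ∀ j, dotL (a j) x = b j → dotL (a j) (x + t • u) = b j := by
    intro j hj
    rw [hexp, hukera j hj, mul_zero, add_zero, hj]
  -- Taylor lower bound
  have e3 : ![u, u, u] = (fun _ : Fin 3 => u) := by
    funext i; fin_cases i <;> rfl
  have h3bd : ∀ s ∈ Set.Icc (0:ℝ) t, |iteratedFDeriv ℝ 3 H (x + s • u) (fun _ => u)| ≤ C := by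
    intro s hs
    have hmem := hfeas s hs.1 hs.2
    have hb1 := hball hmem
    have := (hbd.2 _ hb1 u hu2N).2.2
    rwa [e3] at this
  have htay := taylor_lower' hbd.1 x u htpos.le h3bd
  -- norm computations for v = t • u
  have hv2 : (∑ i, ((t • u) i)^2) = t^2 * N := by rw [sum_smul_sq', hu2N]
  have hv2N : (∑ i, ((t • u) i)^2) / N = t^2 := by
    rw [hv2]; field_simp
  have hCt : C * t ≤ δ / 10 := by
    have h1 : C * t ≤ C * r := mul_le_mul_of_nonneg_left htler hC.le
    have h2 : C * r = δ / 10 := by rw [hrdef]; field_simp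
    linarith
  refine ⟨t • u, smul_ne_zero htpos.ne' hune, ?_, ?_, hfeas t htpos.le le_rfl, hpreserve,
    ?_, ?_, ?_⟩
  · rw [sum_smul_mul', hux, mul_zero]
  · rw [sum_smul_mul', hux0, mul_zero]
  · -- main inequality
    rw [hv2N]
    have hA : 0 ≤ (iteratedFDeriv ℝ 2 H x (fun _ => u)
        - (2 * zeta Pd γ ((∑ i, (x i) ^ 2) / N) * Real.sqrt ε - δ)) * t^2 :=
      mul_nonneg (sub_nonneg.2 hQ2) (sq_nonneg t)
    have hB : 0 ≤ (δ / 10 - C * t) * t^2 :=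
      mul_nonneg (by linarith) (sq_nonneg t)
    have hC' : 0 ≤ fderiv ℝ H x u * t := mul_nonneg hfd htpos.le
    nlinarith [htay, hA, hB, hC', hδ, sq_nonneg t]
  · rw [hv2N, Real.sqrt_sq htpos.le]; exact htler
  · rcases htcases with h | ⟨j0, hj0S, htj0⟩
    · left; rw [hv2N, Real.sqrt_sq htpos.le]; exact h
    · right
      have hd : 0 < dotL (a j0) u := (Finset.mem_filter.1 hj0S).2
      have hact : dotL (a j0) (x + t • u) = b j0 := by
        rw [hexp, htj0, hratiodef]
        field_simp
        ring
      have hle : Uspace a b (x + t • u) ≤ Uspace a b x := by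
        intro z hz
        rw [mem_Uspace'] at hz ⊢
        intro j hj
        exact hz j (hpreserve j hj)
      have hlt : Uspace a b (x + t • u) < Uspace a b x := by
        refine lt_of_le_of_ne hle (fun h => ?_)
        have huU' : u ∈ Uspace a b (x + t • u) := h ▸ huU
        have := mem_Uspace'.1 huU' j0 hact
        rw [this] at hd
        exact absurd hd (lt_irrefl 0)
      exact Submodule.finrank_lt_finrank_of_lt hlt
end
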